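/- For all integers m, n ≥ 3, the union N0(m,n) ∪ N2(m,n) is contained in the rank-two null space N(S_{(m,n)}, 2). -/
import Mathlib


open scoped BigOperators
open MeasureTheory

noncomputable section

/-- 1-based access into a vector `u ∈ ℝ^d`, with the convention that
out-of-range indices (including `0` and anything `> d`) give `0`. -/
def pad1 {d : ℕ} (u : Fin d → ℝ) (i : ℕ) : ℝ :=
  if h : 1 ≤ i ∧ i ≤ d then u ⟨i - 1, by omega⟩ else 0

/-- The lifted linear convolution map `S_{(m,n)} : ℝ^{m×n} → ℝ^{m+n-1}`,
summing the entries of a matrix along its anti-diagonals. -/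
def liftS (m n : ℕ) (W : Matrix (Fin m) (Fin n) ℝ) : Fin (m + n - 1) → ℝ :=
  fun l => ∑ k : Fin m, ∑ j : Fin n, if (k : ℕ) + (j : ℕ) = (l : ℕ) then W k j else 0

/-- Linear convolution `x ⋆ y ∈ ℝ^{m+n-1}` of `x ∈ ℝ^m` and `y ∈ ℝ^n`. -/
def conv {m n : ℕ} (x : Fin m → ℝ) (y : Fin n → ℝ) : Fin (m + n - 1) → ℝ :=
  fun l => ∑ k : Fin m, ∑ j : Fin n, if (k : ℕ) + (j : ℕ) = (l : ℕ) then x k * y j else 0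

/-- The rank-two null space `N(S_{(m,n)}, 2)`. -/
def rankTwoNull (m n : ℕ) : Set (Matrix (Fin m) (Fin n) ℝ) :=
  {Q | Q.rank ≤ 2 ∧ liftS m n Q = 0}

/-- The parametrized family `N0(m,n)`:
`Q(k,l) = u(k)·v(l−1) − u(k−1)·v(l)` (1-based, with zero-padding conventions). -/
def N0set (m n : ℕ) : Set (Matrix (Fin m) (Fin n) ℝ) :=
  {Q | ∃ (u : Fin (m - 1) → ℝ) (v : Fin (n - 1) → ℝ),
    ∀ (k : Fin m) (l : Fin n),
      Q k l = pad1 u ((k : ℕ) + 1) * pad1 v (l : ℕ) - pad1 u (k : ℕ) * pad1 v ((l : ℕ) + 1)}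

/-- The recursively defined family `N2(m,n)`:
`Q(k,l) = u₁(k)·v₁(l−1) + u₂(k−1)·v₂(l)` (1-based, with zero-padding conventions),
where `u₁v₁ᵀ + u₂v₂ᵀ ∈ N(S_{(m-1,n-1)}, 2) \ {0}`. -/
def N2set (m n : ℕ) : Set (Matrix (Fin m) (Fin n) ℝ) :=
  {Q | ∃ (u₁ u₂ : Fin (m - 1) → ℝ) (v₁ v₂ : Fin (n - 1) → ℝ),
    (Matrix.of fun i j => u₁ i * v₁ j + u₂ i * v₂ j) ∈ rankTwoNull (m - 1) (n - 1) ∧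
    (Matrix.of fun i j => u₁ i * v₁ j + u₂ i * v₂ j) ≠ (0 : Matrix (Fin (m - 1)) (Fin (n - 1)) ℝ) ∧
    ∀ (k : Fin m) (l : Fin n),
      Q k l = pad1 u₁ ((k : ℕ) + 1) * pad1 v₁ (l : ℕ) + pad1 u₂ (k : ℕ) * pad1 v₂ ((l : ℕ) + 1)}

/-- The exceptional set `M(m,n) = {Q ∈ N(S_{(m,n)}, 2) : Q(m,1) = 0 and Q(1,n) = 0}` (1-based). -/
def Mexc (m n : ℕ) (hm : 0 < m) (hn : 0 < n) : Set (Matrix (Fin m) (Fin n) ℝ) :=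
  {Q | Q ∈ rankTwoNull m n ∧ Q ⟨m - 1, by omega⟩ ⟨0, hn⟩ = 0 ∧ Q ⟨0, hm⟩ ⟨n - 1, by omega⟩ = 0}

/-- Identifiability of the pair `p = (x,y)` with respect to linear convolution
and the constraint set `K`. -/
def Identifiable {m n : ℕ} (K : Set ((Fin m → ℝ) × (Fin n → ℝ)))
    (p : (Fin m → ℝ) × (Fin n → ℝ)) : Prop :=
  ∀ q ∈ K, conv q.1 q.2 = conv p.1 p.2 →
    ∃ α : ℝ, α ≠ 0 ∧ q.1 = α • p.1 ∧ q.2 = (1 / α) • p.2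

/-- The quotient set `Q∼(w,d)`: pairs `(w*, γ) ∈ ℝ^{d-1} × [0, 2π)` with
`w(j) = w*(j)·cos γ − w*(j−1)·sin γ` for `1 ≤ j ≤ d` (1-based, zero-padding conventions). -/
def quotSet (d : ℕ) (w : Fin d → ℝ) : Set ((Fin (d - 1) → ℝ) × ℝ) :=
  {p | p.2 ∈ Set.Ico 0 (2 * Real.pi) ∧
    ∀ j : Fin d, w j = pad1 p.1 ((j : ℕ) + 1) * Real.cos p.2 - pad1 p.1 (j : ℕ) * Real.sin p.2}

/-- Matrices over `ℝ` carry the (product) metric space structure of `ℝ^{m×n}`. -/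
instance {m n : ℕ} : MetricSpace (Matrix (Fin m) (Fin n) ℝ) :=
  show MetricSpace (Fin m → Fin n → ℝ) from inferInstance

section Aux
open Finset

lemma pad1_zero {d : ℕ} (u : Fin d → ℝ) : pad1 u 0 = 0 := by
  simp [pad1]

lemma pad1_ge {d : ℕ} (u : Fin d → ℝ) {a : ℕ} (h : d + 1 ≤ a) : pad1 u a = 0 := by
  rw [pad1, dif_neg (by omega)]

lemma pad1_val {d : ℕ} (u : Fin d → ℝ) (i : Fin d) : pad1 u ((i : ℕ) + 1) = u i := by
  rw [pad1, dif_pos ⟨by omega, by omega⟩]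
  exact congrArg u (Fin.ext (by simp))

lemma double_fin_sum (m n : ℕ) (G : ℕ → ℕ → ℝ) :
    ∑ k : Fin m, ∑ j : Fin n, G (k : ℕ) (j : ℕ)
      = ∑ k ∈ Finset.range m, ∑ j ∈ Finset.range n, G k j := by
  rw [← Fin.sum_univ_eq_sum_range (fun k => ∑ j ∈ Finset.range n, G k j) m]
  exact Finset.sum_congr rfl fun k _ => Fin.sum_univ_eq_sum_range (G (k : ℕ)) n

lemma sum_indicator_eq (f g : ℕ → ℝ) (m n L : ℕ)
    (hf : ∀ k, m ≤ k → f k = 0) (hg : ∀ j, n ≤ j → g j = 0) :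
    ∑ k ∈ Finset.range m, ∑ j ∈ Finset.range n, (if k + j = L then f k * g j else 0)
      = ∑ a ∈ Finset.range (L + 1), f a * g (L - a) := by
  have hinner : ∀ k, ∑ j ∈ Finset.range (n + L + 1), (if k + j = L then f k * g j else 0)
      = if k ≤ L then f k * g (L - k) else 0 := by
    intro k
    by_cases hk : k ≤ L
    · have hcond : ∀ j, (k + j = L) = (j = L - k) := fun j => by
        apply propext; constructor <;> omega
      simp only [hcond]
      rw [Finset.sum_ite_eq' (Finset.range (n + L + 1)) (L - k) (fun j => f k * g j)]
      rw [if_pos (Finset.mem_range.2 (by omega)), if_pos hk]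
    · rw [if_neg hk]
      refine Finset.sum_eq_zero fun j _ => ?_
      rw [if_neg (by omega)]
  have step1 : ∀ k, ∑ j ∈ Finset.range n, (if k + j = L then f k * g j else 0)
      = if k ≤ L then f k * g (L - k) else 0 := by
    intro k
    rw [← hinner k]
    refine Finset.sum_subset (Finset.range_subset_range.2 (by omega)) fun j _ hj => ?_
    have hnj : n ≤ j := le_of_not_gt (fun h => hj (Finset.mem_range.2 h))
    simp [hg j hnj]
  simp only [step1]
  have step2 : ∑ k ∈ Finset.range m, (if k ≤ L then f k * g (L - k) else 0)
      = ∑ k ∈ Finset.range (m + L + 1), (if k ≤ L then f k * g (L - k) else 0) := by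
    refine Finset.sum_subset (Finset.range_subset_range.2 (by omega)) fun k _ hk => ?_
    have hmk : m ≤ k := le_of_not_gt (fun h => hk (Finset.mem_range.2 h))
    simp [hf k hmk]
  have step3 : ∑ a ∈ Finset.range (L + 1), f a * g (L - a)
      = ∑ k ∈ Finset.range (m + L + 1), (if k ≤ L then f k * g (L - k) else 0) := by
    rw [← Finset.sum_subset (Finset.range_subset_range.2 (show L + 1 ≤ m + L + 1 by omega))
      (fun k _ hk => if_neg (by
        have : L + 1 ≤ k := le_of_not_gt (fun h => hk (Finset.mem_range.2 h)); omega))]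
    exact Finset.sum_congr rfl fun a ha =>
      (if_pos (by have := Finset.mem_range.1 ha; omega)).symm
  rw [step2, step3]

/-- antidiagonal sum -/
def adiag (f g : ℕ → ℝ) (N : ℕ) : ℝ := ∑ a ∈ Finset.range (N + 1), f a * g (N - a)

lemma shiftA (f g : ℕ → ℝ) (hf0 : f 0 = 0) (L : ℕ) :
    ∑ a ∈ Finset.range (L + 1), f (a + 1) * g (L - a) = adiag f g (L + 1) := by
  rw [adiag]
  conv_rhs => rw [Finset.sum_range_succ']
  rw [hf0]
  simp only [zero_mul, add_zero]
  exact Finset.sum_congr rfl fun a _ => by rw [show L + 1 - (a + 1) = L - a from by omega]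

lemma shiftB (f g : ℕ → ℝ) (hg0 : g 0 = 0) (L : ℕ) :
    ∑ a ∈ Finset.range (L + 1), f a * g (L - a + 1) = adiag f g (L + 1) := by
  rw [adiag]
  conv_rhs => rw [Finset.sum_range_succ]
  rw [Nat.sub_self, hg0]
  simp only [mul_zero, add_zero]
  refine Finset.sum_congr rfl fun a ha => ?_
  have ha' := Finset.mem_range.1 ha
  rw [show L + 1 - a = L - a + 1 from by omega]

lemma shiftC (f g : ℕ → ℝ) (hf0 : f 0 = 0) (hg0 : g 0 = 0) (L : ℕ) :
    ∑ a ∈ Finset.range (L + 1), f (a + 1) * g (L - a + 1) = adiag f g (L + 2) := by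
  rw [adiag]
  conv_rhs => rw [Finset.sum_range_succ']
  rw [hf0]
  simp only [zero_mul, add_zero]
  conv_rhs => rw [Finset.sum_range_succ]
  rw [show L + 2 - (L + 1 + 1) = 0 by omega, hg0, mul_zero, add_zero]
  refine Finset.sum_congr rfl fun a ha => ?_
  have ha' := Finset.mem_range.1 ha
  rw [show L + 2 - (a + 1) = L - a + 1 from by omega]

lemma adiag_vanish (f g : ℕ → ℝ) (m n N : ℕ)
    (hf : ∀ k, m ≤ k → f k = 0) (hg : ∀ j, n ≤ j → g j = 0) (hN : m + n - 1 ≤ N) :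
    adiag f g N = 0 := by
  refine Finset.sum_eq_zero fun a ha => ?_
  have := Finset.mem_range.1 ha
  by_cases h : m ≤ a
  · rw [hf a h, zero_mul]
  · rw [hg (N - a) (by omega), mul_zero]

lemma adiag_one (f g : ℕ → ℝ) (hf0 : f 0 = 0) (hg0 : g 0 = 0) :
    adiag f g 1 = 0 := by
  rw [adiag]
  simp [Finset.sum_range_succ, hf0, hg0]

end Aux

lemma liftS_eq_range (m n : ℕ) (Q : Matrix (Fin m) (Fin n) ℝ) (l : Fin (m + n - 1))
    (G : ℕ → ℕ → ℝ) (hQ : ∀ (k : Fin m) (j : Fin n), Q k j = G (k : ℕ) (j : ℕ)) :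
    liftS m n Q l = ∑ k ∈ Finset.range m, ∑ j ∈ Finset.range n,
      (if k + j = (l : ℕ) then G k j else 0) := by
  rw [liftS, ← double_fin_sum m n (fun k j => if k + j = (l : ℕ) then G k j else 0)]
  exact Finset.sum_congr rfl fun k _ => Finset.sum_congr rfl fun j _ => by rw [hQ k j]

lemma rank_le_two (m n : ℕ) (Q : Matrix (Fin m) (Fin n) ℝ)
    (a c : Fin m → ℝ) (b d : Fin n → ℝ)
    (h : ∀ k l, Q k l = a k * b l + c k * d l) : Q.rank ≤ 2 := by
  let X : Matrix (Fin m) (Fin 2) ℝ := fun k i => if i = 0 then a k else c k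
  let Y : Matrix (Fin 2) (Fin n) ℝ := fun i l => if i = 0 then b l else d l
  have hXY : Q = X * Y := by
    ext k l
    rw [h k l, Matrix.mul_apply, Fin.sum_univ_two]
    simp [X, Y]
  rw [hXY]
  refine le_trans (Matrix.rank_mul_le_left X Y) ?_
  simpa using Matrix.rank_le_card_width X

/-- for `m, n ≥ 3`, `N0(m,n) ∪ N2(m,n) ⊆ N(S_{(m,n)}, 2)`. -/
theorem stmt4 (m n : ℕ) (hm : 3 ≤ m) (hn : 3 ≤ n) :
    N0set m n ∪ N2set m n ⊆ rankTwoNull m n := by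
  rintro Q (⟨u, v, h⟩ | ⟨u₁, u₂, v₁, v₂, hP, _, h⟩)
  · -- N0 case
    set f : ℕ → ℝ := pad1 u with hf
    set g : ℕ → ℝ := pad1 v with hg
    have hf0 : f 0 = 0 := pad1_zero u
    have hg0 : g 0 = 0 := pad1_zero v
    have hfm : ∀ a, m ≤ a → f a = 0 := fun a ha => pad1_ge u (by omega)
    have hgn : ∀ a, n ≤ a → g a = 0 := fun a ha => pad1_ge v (by omega)
    constructor
    · exact rank_le_two m n Q (fun k => f ((k : ℕ) + 1)) (fun k => -f (k : ℕ))
        (fun l => g (l : ℕ)) (fun l => g ((l : ℕ) + 1))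
        (fun k l => by rw [h k l]; ring)
    · funext l
      rw [liftS_eq_range m n Q l (fun k j => f (k + 1) * g j - f k * g (j + 1)) h]
      have hsplit : ∀ k j : ℕ,
          (if k + j = (l : ℕ) then f (k + 1) * g j - f k * g (j + 1) else 0)
            = (if k + j = (l : ℕ) then f (k + 1) * g j else 0)
              - (if k + j = (l : ℕ) then f k * g (j + 1) else 0) := by
        intro k j; split <;> simp
      simp only [hsplit, Finset.sum_sub_distrib]
      rw [sum_indicator_eq (fun k => f (k + 1)) g m n (l : ℕ)
            (fun k hk => hfm (k + 1) (by omega)) hgn,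
          sum_indicator_eq f (fun j => g (j + 1)) m n (l : ℕ)
            hfm (fun j hj => hgn (j + 1) (by omega)),
          shiftA f g hf0, shiftB f g hg0]
      simp
  · -- N2 case
    set f₁ : ℕ → ℝ := pad1 u₁ with hf₁
    set f₂ : ℕ → ℝ := pad1 u₂ with hf₂
    set g₁ : ℕ → ℝ := pad1 v₁ with hg₁
    set g₂ : ℕ → ℝ := pad1 v₂ with hg₂
    have hf₁0 : f₁ 0 = 0 := pad1_zero u₁
    have hf₂0 : f₂ 0 = 0 := pad1_zero u₂
    have hg₁0 : g₁ 0 = 0 := pad1_zero v₁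
    have hg₂0 : g₂ 0 = 0 := pad1_zero v₂
    have hf₁m : ∀ a, m ≤ a → f₁ a = 0 := fun a ha => pad1_ge u₁ (by omega)
    have hf₂m : ∀ a, m ≤ a → f₂ a = 0 := fun a ha => pad1_ge u₂ (by omega)
    have hg₁n : ∀ a, n ≤ a → g₁ a = 0 := fun a ha => pad1_ge v₁ (by omega)
    have hg₂n : ∀ a, n ≤ a → g₂ a = 0 := fun a ha => pad1_ge v₂ (by omega)
    -- the key consequence of hP : all antidiagonal sums of P vanish
    have hPnull : ∀ N : ℕ, adiag f₁ g₁ N + adiag f₂ g₂ N = 0 := by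
      intro N
      rcases Nat.lt_or_ge N 2 with hN | hN
      · interval_cases N
        · simp [adiag, hf₁0, hf₂0]
        · rw [adiag_one f₁ g₁ hf₁0 hg₁0, adiag_one f₂ g₂ hf₂0 hg₂0, add_zero]
      rcases Nat.lt_or_ge N (m + n - 1) with hN2 | hN2
      · -- use hP at l' = N - 2
        have hl' : N - 2 < (m - 1) + (n - 1) - 1 := by omega
        have := congrFun hP.2 ⟨N - 2, hl'⟩
        rw [liftS_eq_range (m - 1) (n - 1) _ ⟨N - 2, hl'⟩
            (fun k j => f₁ (k + 1) * g₁ (j + 1) + f₂ (k + 1) * g₂ (j + 1))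
            (fun k j => by
              show u₁ k * v₁ j + u₂ k * v₂ j = _
              rw [← pad1_val u₁ k, ← pad1_val v₁ j, ← pad1_val u₂ k, ← pad1_val v₂ j])] at this
        have hsplit : ∀ k j : ℕ,
            (if k + j = ((⟨N - 2, hl'⟩ : Fin ((m-1)+(n-1)-1)) : ℕ)
                then f₁ (k + 1) * g₁ (j + 1) + f₂ (k + 1) * g₂ (j + 1) else 0)
              = (if k + j = N - 2 then f₁ (k + 1) * g₁ (j + 1) else 0)
                + (if k + j = N - 2 then f₂ (k + 1) * g₂ (j + 1) else 0) := by
          intro k j; split <;> simp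
        simp only [hsplit, Finset.sum_add_distrib] at this
        rw [sum_indicator_eq (fun k => f₁ (k + 1)) (fun j => g₁ (j + 1)) (m - 1) (n - 1)
              (N - 2) (fun k hk => hf₁m (k + 1) (by omega)) (fun j hj => hg₁n (j + 1) (by omega)),
            sum_indicator_eq (fun k => f₂ (k + 1)) (fun j => g₂ (j + 1)) (m - 1) (n - 1)
              (N - 2) (fun k hk => hf₂m (k + 1) (by omega)) (fun j hj => hg₂n (j + 1) (by omega)),
            shiftC f₁ g₁ hf₁0 hg₁0, shiftC f₂ g₂ hf₂0 hg₂0] at this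
        rw [show N - 2 + 2 = N by omega] at this
        simpa using this
      · rw [adiag_vanish f₁ g₁ m n N hf₁m hg₁n (by omega),
            adiag_vanish f₂ g₂ m n N hf₂m hg₂n (by omega), add_zero]
    constructor
    · exact rank_le_two m n Q (fun k => f₁ ((k : ℕ) + 1)) (fun k => f₂ (k : ℕ))
        (fun l => g₁ (l : ℕ)) (fun l => g₂ ((l : ℕ) + 1))
        (fun k l => by rw [h k l])
    · funext l
      rw [liftS_eq_range m n Q l (fun k j => f₁ (k + 1) * g₁ j + f₂ k * g₂ (j + 1)) h]
      have hsplit : ∀ k j : ℕ,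
          (if k + j = (l : ℕ) then f₁ (k + 1) * g₁ j + f₂ k * g₂ (j + 1) else 0)
            = (if k + j = (l : ℕ) then f₁ (k + 1) * g₁ j else 0)
              + (if k + j = (l : ℕ) then f₂ k * g₂ (j + 1) else 0) := by
        intro k j; split <;> simp
      simp only [hsplit, Finset.sum_add_distrib]
      rw [sum_indicator_eq (fun k => f₁ (k + 1)) g₁ m n (l : ℕ)
            (fun k hk => hf₁m (k + 1) (by omega)) hg₁n,
          sum_indicator_eq f₂ (fun j => g₂ (j + 1)) m n (l : ℕ)
            hf₂m (fun j hj => hg₂n (j + 1) (by omega)),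
          shiftA f₁ g₁ hf₁0, shiftB f₂ g₂ hg₂0]
      simpa using hPnull ((l : ℕ) + 1)
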